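/- Two distinct points m, m' ∈ E are conjugate (inverse) with respect to a non-isotropic cycle p if and only if p lies in the two-dimensional linear span of the zero circles q(X) = X·X − 2m·X + m·m and q*(X) = X·X − 2m'·X + m'·m'. -/

import Mathlib

/-- Two distinct points `m, m'` of `E` are conjugate with respect to a non-isotropic
cycle `p` (i.e. the reflection defined by `p` maps the zero circle at `m` to a nonzero
scalar multiple of the zero circle at `m'`) iff `p` lies in the linear span of the two
zero circles at `m` and `m'`. -/
theorem stmt_14 {k : Type*} [Field k] (hchar : (2 : k) ≠ 0)
    {E : Type*} [AddCommGroup E] [Module k E]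
    (B : LinearMap.BilinForm k E) (hB : B.IsSymm)
    (haniso : ∀ x : E, B x x = 0 → x = 0)
    (cyc : (k × E × k) → (k × E × k) → k)
    (hcyc : ∀ p q : k × E × k,
      cyc p q = B p.2.1 q.2.1 - 2 * p.1 * q.2.2 - 2 * q.1 * p.2.2)
    (m m' : E) (hmm : m ≠ m')
    (p : k × E × k) (hpiso : cyc p p ≠ 0)
    (q q' : k × E × k)
    (hq : q = ((1 : k), -((2 : k) • m), B m m))
    (hq' : q' = ((1 : k), -((2 : k) • m'), B m' m')) :
    (∃ lam : k, lam ≠ 0 ∧ q - (2 * (cyc q p / cyc p p)) • p = lam • q') ↔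
      p ∈ Submodule.span k ({q, q'} : Set (k × E × k)) := by
  have hsymm : B m' m = B m m' := (LinearMap.BilinForm.isSymm_def.mp hB m m').symm
  have hdiff : B (m - m') (m - m') ≠ 0 := fun h => hmm (sub_eq_zero.mp (haniso _ h))
  have he : cyc q q' = -2 * B (m - m') (m - m') := by
    rw [hcyc, hq, hq']
    simp only [map_neg, map_smul, map_sub, LinearMap.neg_apply, LinearMap.smul_apply,
      LinearMap.sub_apply, smul_eq_mul]
    rw [hsymm]; ring
  have he0 : cyc q q' ≠ 0 := by
    rw [he]; exact mul_ne_zero (neg_ne_zero.mpr hchar) hdiff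
  constructor
  · rintro ⟨lam, hlam, heq⟩
    set c := 2 * (cyc q p / cyc p p) with hc
    by_cases hc0 : c = 0
    · exfalso
      rw [hc0, zero_smul, sub_zero] at heq
      rw [hq, hq'] at heq
      have h1 : (1 : k) = lam := by
        have := congrArg Prod.fst heq
        simpa using this
      have h2 : -((2 : k) • m) = lam • (-((2 : k) • m')) := by
        have := congrArg (fun x : k × E × k => x.2.1) heq
        simpa using this
      rw [← h1, one_smul] at h2
      exact hmm (smul_right_injective E hchar (neg_injective h2))
    · have hp : p = c⁻¹ • ((1 : k) • q + (-lam) • q') := by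
        have : c • p = (1 : k) • q + (-lam) • q' := by
          rw [one_smul, neg_smul, ← heq]; abel
        rw [← this, smul_smul, inv_mul_cancel₀ hc0, one_smul]
      rw [hp]
      exact Submodule.smul_mem _ _ (Submodule.add_mem _
        (Submodule.smul_mem _ _ (Submodule.subset_span (Set.mem_insert _ _)))
        (Submodule.smul_mem _ _ (Submodule.subset_span (Set.mem_insert_of_mem _ rfl))))
  · intro hmem
    obtain ⟨a, b, hab⟩ := Submodule.mem_span_pair.mp hmem
    -- compute cyc p p and cyc q p
    have hqq : cyc q q = 0 := by
      rw [hcyc, hq]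
      simp only [map_neg, map_smul, LinearMap.neg_apply, LinearMap.smul_apply, smul_eq_mul]
      ring
    have hq'q' : cyc q' q' = 0 := by
      rw [hcyc, hq']
      simp only [map_neg, map_smul, LinearMap.neg_apply, LinearMap.smul_apply, smul_eq_mul]
      ring
    have hpp : cyc p p = 2 * a * b * cyc q q' := by
      rw [← hab, hcyc, hcyc, hq, hq']
      simp only [Prod.smul_fst, Prod.smul_snd, Prod.fst_add, Prod.snd_add, Prod.smul_mk,
        Prod.mk_add_mk, map_add, map_neg, map_smul, LinearMap.add_apply, LinearMap.neg_apply,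
        LinearMap.smul_apply, smul_eq_mul]
      rw [hsymm]; ring
    have hqp : cyc q p = b * cyc q q' := by
      rw [← hab, hcyc, hcyc]
      rw [hq, hq']
      simp only [Prod.smul_fst, Prod.smul_snd, Prod.fst_add, Prod.snd_add, Prod.smul_mk,
        Prod.mk_add_mk, map_add, map_neg, map_smul, LinearMap.add_apply, LinearMap.neg_apply,
        LinearMap.smul_apply, smul_eq_mul]
      ring
    have ha0 : a ≠ 0 := by
      intro h; apply hpiso; rw [hpp, h]; ring
    have hb0 : b ≠ 0 := by
      intro h; apply hpiso; rw [hpp, h]; ring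
    refine ⟨-(b / a), neg_ne_zero.mpr (div_ne_zero hb0 ha0), ?_⟩
    have hcoef : 2 * (cyc q p / cyc p p) = a⁻¹ := by
      rw [hqp, hpp]
      field_simp
    rw [hcoef, ← hab]
    rw [smul_add, smul_smul, smul_smul, inv_mul_cancel₀ ha0, one_smul]
    module
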